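/- Let ABCD be a quadrilateral with perpendicular diagonals AC ⊥ BD meeting at P, and let E, F, G, H be the orthocenters of triangles BCD, CDA, DAB, ABC respectively. Then lines EG and FH also meet at P; that is, the diagonal point of EFGH coincides with the diagonal point of ABCD. -/

import Mathlib

lemma inner_two (u w : EuclideanSpace ℝ (Fin 2)) :
    (inner ℝ u w : ℝ) = u 0 * w 0 + u 1 * w 1 := by
  simp [PiLp.inner_apply, Fin.sum_univ_two, RCLike.inner_apply, mul_comm]

lemma perp_perp (w u v : EuclideanSpace ℝ (Fin 2)) (hw : w ≠ 0) (hv : v ≠ 0)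
    (hu : (inner ℝ u w : ℝ) = 0) (hvw : (inner ℝ v w : ℝ) = 0) : ∃ t : ℝ, u = t • v := by
  rw [inner_two] at hu hvw
  have key : u 0 * v 1 = u 1 * v 0 := by
    have hw' : w 0 ≠ 0 ∨ w 1 ≠ 0 := by
      by_contra h
      push_neg at h
      exact hw (by ext i; fin_cases i <;> simp [h.1, h.2])
    rcases hw' with h0 | h1
    · apply mul_left_cancel₀ h0
      linear_combination v 1 * hu - u 1 * hvw
    · apply mul_left_cancel₀ h1
      linear_combination (-(v 0)) * hu + u 0 * hvw
  have hv' : v 0 ≠ 0 ∨ v 1 ≠ 0 := by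
    by_contra h
    push_neg at h
    exact hv (by ext i; fin_cases i <;> simp [h.1, h.2])
  rcases hv' with h0 | h1
  · exact ⟨u 0 / v 0, by
      ext i; fin_cases i <;> simp [PiLp.smul_apply] <;> field_simp <;> linarith [key]⟩
  · exact ⟨u 1 / v 1, by
      ext i; fin_cases i <;> simp [PiLp.smul_apply] <;> field_simp <;> linarith [key]⟩

lemma on_line (w v X Q P : EuclideanSpace ℝ (Fin 2)) (hw : w ≠ 0) (hv : v ≠ 0)
    (h1 : (inner ℝ (X - Q) w : ℝ) = 0) (h2 : ∃ s : ℝ, Q - P = s • v)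
    (hvw : (inner ℝ v w : ℝ) = 0) : ∃ t : ℝ, X - P = t • v := by
  obtain ⟨s, hs⟩ := h2
  apply perp_perp w _ v hw hv _ hvw
  have hXP : X - P = (X - Q) + (Q - P) := by abel
  rw [hXP, inner_add_left, hs, real_inner_smul_left, h1, hvw]
  ring

lemma coll3 (X P Y v : EuclideanSpace ℝ (Fin 2))
    (hX : ∃ t : ℝ, X - P = t • v) (hY : ∃ t : ℝ, Y - P = t • v) :
    Collinear ℝ ({X, P, Y} : Set (EuclideanSpace ℝ (Fin 2))) := by
  obtain ⟨t, ht⟩ := hX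
  obtain ⟨s, hs⟩ := hY
  rw [collinear_iff_of_mem (show P ∈ ({X, P, Y} : Set _) by simp)]
  refine ⟨v, ?_⟩
  rintro p (rfl | rfl | rfl)
  · exact ⟨t, by rw [← ht, vadd_eq_add, sub_add_cancel]⟩
  · exact ⟨0, by simp⟩
  · exact ⟨s, by rw [← hs, vadd_eq_add, sub_add_cancel]⟩

/-- `X` is the orthocenter of triangle `PQR`: it lies on all three altitudes. -/
def IsOrthocenter (X P Q R : EuclideanSpace ℝ (Fin 2)) : Prop :=
  (inner ℝ (X - P) (Q - R) : ℝ) = 0 ∧ (inner ℝ (X - Q) (R - P) : ℝ) = 0 ∧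
    (inner ℝ (X - R) (P - Q) : ℝ) = 0

theorem orthodiagonal_orthocenter_same_diagonal_point
    (A B C D P E F G H : EuclideanSpace ℝ (Fin 2))
    (hconv : P ∈ segment ℝ A C ∧ P ∈ segment ℝ B D)
    (hperp : (inner ℝ (C - A) (D - B) : ℝ) = 0)
    (h₁ : ¬ Collinear ℝ ({A, B, C} : Set (EuclideanSpace ℝ (Fin 2))))
    (h₂ : ¬ Collinear ℝ ({A, B, D} : Set (EuclideanSpace ℝ (Fin 2))))
    (h₃ : ¬ Collinear ℝ ({A, C, D} : Set (EuclideanSpace ℝ (Fin 2))))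
    (h₄ : ¬ Collinear ℝ ({B, C, D} : Set (EuclideanSpace ℝ (Fin 2))))
    (hE : IsOrthocenter E B C D)
    (hF : IsOrthocenter F C D A)
    (hG : IsOrthocenter G D A B)
    (hH : IsOrthocenter H A B C) :
    Collinear ℝ ({E, P, G} : Set (EuclideanSpace ℝ (Fin 2))) ∧
    Collinear ℝ ({F, P, H} : Set (EuclideanSpace ℝ (Fin 2))) := by
  have hCA : C - A ≠ 0 := by
    intro h
    rw [sub_eq_zero] at h
    have heq : ({A, C, D} : Set (EuclideanSpace ℝ (Fin 2))) = {A, D} := by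
      rw [h]; ext x; simp; try tauto
    exact h₃ (heq ▸ collinear_pair ℝ A D)
  have hDB : D - B ≠ 0 := by
    intro h
    rw [sub_eq_zero] at h
    have heq : ({B, C, D} : Set (EuclideanSpace ℝ (Fin 2))) = {B, C} := by
      rw [h]; ext x; simp; try tauto
    exact h₄ (heq ▸ collinear_pair ℝ B C)
  -- P on line AC
  obtain ⟨a, b, _, _, hab, hP1⟩ := hconv.1
  obtain ⟨c, d, _, _, hcd, hP2⟩ := hconv.2
  have hAP : A - P = (-b) • (C - A) := by
    rw [← hP1]
    have : a = 1 - b := by linarith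
    subst this
    module
  have hCP : C - P = a • (C - A) := by
    rw [← hP1]
    have : b = 1 - a := by linarith
    subst this
    module
  have hBP : B - P = (-d) • (D - B) := by
    rw [← hP2]
    have : c = 1 - d := by linarith
    subst this
    module
  have hDP : D - P = c • (D - B) := by
    rw [← hP2]
    have : d = 1 - c := by linarith
    subst this
    module
  have hperp' : (inner ℝ (D - B) (C - A) : ℝ) = 0 := by
    rw [real_inner_comm]; exact hperp
  constructor
  · apply coll3
    · exact on_line (D - B) (C - A) E C P hDB hCA hE.2.1 ⟨a, hCP⟩ hperp
    · have hg : (inner ℝ (G - A) (D - B) : ℝ) = 0 := by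
        have := hG.2.1
        rwa [show B - D = -(D - B) by abel, inner_neg_right, neg_eq_zero] at this
      exact on_line (D - B) (C - A) G A P hDB hCA hg ⟨-b, hAP⟩ hperp
  · apply coll3
    · have hf : (inner ℝ (F - D) (C - A) : ℝ) = 0 := by
        have := hF.2.1
        rwa [show A - C = -(C - A) by abel, inner_neg_right, neg_eq_zero] at this
      exact on_line (C - A) (D - B) F D P hCA hDB hf ⟨c, hDP⟩ hperp'
    · exact on_line (C - A) (D - B) H B P hCA hDB hH.2.1 ⟨-d, hBP⟩ hperp'
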